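/- arXiv:1703.05118 — 4 statements merged into one kernel-verified Lean document; each statement's English description precedes it below -/
import Mathlib

section
/- For the Moser sequence w̃_n (as defined with parameter r > 0), the L² norms satisfy (log n)·∫_{ℝ²} w̃_n² dx → r²/4 as n → ∞. -/
open Real MeasureTheory Filter

/-- The Moser function on the plane with parameters `n` and `r`. -/
noncomputable def moser (n : ℕ) (r : ℝ) (x : EuclideanSpace ℝ (Fin 2)) : ℝ :=
  if ‖x‖ ≤ r / n then Real.sqrt (Real.log n) / Real.sqrt (2 * Real.pi)
  else if ‖x‖ ≤ r then Real.log (r / ‖x‖) / (Real.sqrt (Real.log n) * Real.sqrt (2 * Real.pi))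
  else 0

/-- The radial profile of the Moser function. -/
noncomputable def mrad (n : ℕ) (r : ℝ) (y : ℝ) : ℝ :=
  if y ≤ r / n then Real.sqrt (Real.log n) / Real.sqrt (2 * Real.pi)
  else if y ≤ r then Real.log (r / y) / (Real.sqrt (Real.log n) * Real.sqrt (2 * Real.pi))
  else 0

lemma moser_eq_mrad (n : ℕ) (r : ℝ) (x : EuclideanSpace ℝ (Fin 2)) :
    moser n r x = mrad n r ‖x‖ := rfl

open intervalIntegral in
lemma integral_id' (a b : ℝ) : ∫ x in a..b, x = (b ^ 2 - a ^ 2) / 2 := integral_id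

/-- FTC computation of `∫ y (log (r/y))²` on `(a, r]`. -/
lemma ftc_piece (r a : ℝ) (hr : 0 < r) (ha : 0 < a) (har : a ≤ r) :
    ∫ y in Set.Ioc a r, y * (Real.log (r / y)) ^ 2 =
      r ^ 2 / 4 - a ^ 2 * ((Real.log (r / a)) ^ 2 / 2 + Real.log (r / a) / 2 + 1 / 4) := by
  rw [← intervalIntegral.integral_of_le har]
  have hderiv : ∀ y ∈ Set.uIcc a r, HasDerivAt
      (fun y => y ^ 2 * ((Real.log (r / y)) ^ 2 / 2 + Real.log (r / y) / 2 + 1 / 4))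
      (y * (Real.log (r / y)) ^ 2) y := by
    intro y hy
    rw [Set.uIcc_of_le har] at hy
    have hy0 : 0 < y := lt_of_lt_of_le ha hy.1
    have hG : HasDerivAt (fun y => Real.log (r / y)) (-y⁻¹) y := by
      have h1 : HasDerivAt (fun y : ℝ => Real.log r - Real.log y) (-y⁻¹) y := by
        simpa using (Real.hasDerivAt_log hy0.ne').const_sub (Real.log r)
      refine h1.congr_of_eventuallyEq ?_
      filter_upwards [eventually_gt_nhds hy0] with z hz
      rw [Real.log_div hr.ne' hz.ne']
    have h2 : HasDerivAt (fun y => (Real.log (r / y)) ^ 2 / 2 + Real.log (r / y) / 2 + 1 / 4)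
        ((2 * Real.log (r / y) ^ 1 * -y⁻¹) / 2 + (-y⁻¹) / 2) y := by
      exact (((hG.pow 2).div_const 2).add (hG.div_const 2)).add_const (1 / 4)
    have h3 := (hasDerivAt_pow 2 y).mul h2
    refine HasDerivAt.congr_deriv h3 ?_
    have : (y : ℝ) ≠ 0 := hy0.ne'
    field_simp
    ring
  have hcont : ContinuousOn (fun y => y * (Real.log (r / y)) ^ 2) (Set.uIcc a r) := by
    rw [Set.uIcc_of_le har]
    refine continuousOn_id.mul (ContinuousOn.pow ?_ 2)
    refine ContinuousOn.log
      (continuousOn_const.div continuousOn_id fun y hy => (lt_of_lt_of_le ha hy.1).ne') ?_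
    intro y hy
    exact div_ne_zero hr.ne' (lt_of_lt_of_le ha hy.1).ne'
  rw [intervalIntegral.integral_eq_sub_of_hasDerivAt hderiv hcont.intervalIntegrable]
  rw [div_self hr.ne', Real.log_one]
  ring

lemma integral_mrad_sq (r : ℝ) (hr : 0 < r) (n : ℕ) (hn : 2 ≤ n) :
    ∫ y in Set.Ioi (0 : ℝ), y * (mrad n r y) ^ 2 =
      Real.log n / (2 * Real.pi) * ((r / n) ^ 2 / 2)
      + (r ^ 2 / 4 - (r / n) ^ 2 * ((Real.log n) ^ 2 / 2 + Real.log n / 2 + 1 / 4))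
        / (Real.log n * (2 * Real.pi)) := by
  have hn1 : (1 : ℝ) < n := by exact_mod_cast lt_of_lt_of_le one_lt_two hn
  have hn0 : (0 : ℝ) < n := lt_trans one_pos hn1
  have hL : 0 < Real.log n := Real.log_pos hn1
  have hπ : 0 < 2 * Real.pi := by positivity
  have ha : 0 < r / n := div_pos hr hn0
  have har : r / n ≤ r := div_le_self hr.le hn1.le
  have hval1 : ∀ y ∈ Set.Ioc (0 : ℝ) (r / n),
      y * (mrad n r y) ^ 2 = y * (Real.log n / (2 * Real.pi)) := by
    intro y hy
    rw [mrad, if_pos hy.2, div_pow, Real.sq_sqrt hL.le, Real.sq_sqrt hπ.le]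
  have hval2 : ∀ y ∈ Set.Ioc (r / n) r, y * (mrad n r y) ^ 2 =
      y * (Real.log (r / y)) ^ 2 * (Real.log n * (2 * Real.pi))⁻¹ := by
    intro y hy
    rw [mrad, if_neg (not_le.mpr hy.1), if_pos hy.2, div_pow, mul_pow,
      Real.sq_sqrt hL.le, Real.sq_sqrt hπ.le]
    field_simp
  have hval3 : ∀ y ∈ Set.Ioi r, y * (mrad n r y) ^ 2 = 0 := by
    intro y hy
    rw [Set.mem_Ioi] at hy
    rw [mrad, if_neg (not_le.mpr (lt_of_le_of_lt har hy)), if_neg (not_le.mpr hy)]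
    ring
  have hi1 : IntegrableOn (fun y => y * (mrad n r y) ^ 2) (Set.Ioc 0 (r / n)) := by
    rw [integrableOn_congr_fun hval1 measurableSet_Ioc]
    exact (continuous_id.mul continuous_const).integrableOn_Ioc
  have hi2 : IntegrableOn (fun y => y * (mrad n r y) ^ 2) (Set.Ioc (r / n) r) := by
    rw [integrableOn_congr_fun hval2 measurableSet_Ioc]
    refine IntegrableOn.mono_set ?_ Set.Ioc_subset_Icc_self
    refine ContinuousOn.integrableOn_compact isCompact_Icc ?_
    refine ContinuousOn.mul (continuousOn_id.mul (ContinuousOn.pow ?_ 2)) continuousOn_const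
    refine ContinuousOn.log
      (continuousOn_const.div continuousOn_id fun y hy => (lt_of_lt_of_le ha hy.1).ne') ?_
    intro y hy
    exact div_ne_zero hr.ne' (lt_of_lt_of_le ha hy.1).ne'
  have hi3 : IntegrableOn (fun y => y * (mrad n r y) ^ 2) (Set.Ioi r) := by
    rw [integrableOn_congr_fun hval3 measurableSet_Ioi]
    exact integrableOn_zero
  have hi12 : IntegrableOn (fun y => y * (mrad n r y) ^ 2) (Set.Ioc 0 r) := by
    rw [← Set.Ioc_union_Ioc_eq_Ioc ha.le har]
    exact hi1.union hi2
  rw [← Set.Ioc_union_Ioi_eq_Ioi hr.le,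
    setIntegral_union Set.Ioc_disjoint_Ioi_same measurableSet_Ioi hi12 hi3,
    setIntegral_congr_fun measurableSet_Ioi hval3, integral_zero, add_zero,
    ← Set.Ioc_union_Ioc_eq_Ioc ha.le har,
    setIntegral_union (Set.Ioc_disjoint_Ioc_of_le le_rfl) measurableSet_Ioc hi1 hi2,
    setIntegral_congr_fun measurableSet_Ioc hval1,
    setIntegral_congr_fun measurableSet_Ioc hval2]
  rw [integral_mul_const, integral_mul_const, ← intervalIntegral.integral_of_le ha.le,
    integral_id', ftc_piece r (r / n) hr ha har]
  have hrn : r / (r / n) = n := by field_simp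
  rw [hrn]
  field_simp
  ring

/-- `(log n) · ∫ w̃_n² → r²/4` as `n → ∞`. -/
theorem moser_L2_asymptotics (r : ℝ) (hr : 0 < r) :
    Tendsto (fun n : ℕ =>
        Real.log n * ∫ x : EuclideanSpace ℝ (Fin 2), (moser n r x) ^ 2)
      atTop (nhds (r ^ 2 / 4)) := by
  have key : ∀ n : ℕ, 2 ≤ n →
      Real.log n * ∫ x : EuclideanSpace ℝ (Fin 2), (moser n r x) ^ 2 =
        r ^ 2 / 4 - r ^ 2 * (Real.log n / n * (1 / n) / 2 + 1 / n * (1 / n) / 4) := by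
    intro n hn
    have hn1 : (1 : ℝ) < n := by exact_mod_cast lt_of_lt_of_le one_lt_two hn
    have hn0 : (0 : ℝ) < n := lt_trans one_pos hn1
    have hL : 0 < Real.log n := Real.log_pos hn1
    have hπ : (0 : ℝ) < Real.pi := Real.pi_pos
    have h1 : ∫ x : EuclideanSpace ℝ (Fin 2), (moser n r x) ^ 2 =
        ∫ x : EuclideanSpace ℝ (Fin 2), (fun y => (mrad n r y) ^ 2) ‖x‖ := rfl
    rw [h1, integral_fun_norm_addHaar volume (fun y => (mrad n r y) ^ 2)]
    have hball : (volume (Metric.ball (0 : EuclideanSpace ℝ (Fin 2)) 1)).toReal = Real.pi := by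
      rw [EuclideanSpace.volume_ball]
      simp only [Fintype.card_fin]
      rw [show (((2:ℕ) : ℝ) / 2 + 1) = 2 by norm_num, Real.Gamma_two]
      rw [ENNReal.ofReal_one, one_pow, one_mul, div_one,
        Real.sq_sqrt Real.pi_pos.le, ENNReal.toReal_ofReal Real.pi_pos.le]
    rw [finrank_euclideanSpace_fin, measureReal_def, hball]
    simp only [show (2 - 1 : ℕ) = 1 from rfl, pow_one, smul_eq_mul, nsmul_eq_mul, Nat.cast_ofNat]
    rw [integral_mrad_sq r hr n hn]
    field_simp
    ring
  have t1 : Tendsto (fun x : ℝ => Real.log x / x) atTop (nhds 0) := by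
    simpa using Real.tendsto_pow_log_div_mul_add_atTop 1 0 1 one_ne_zero
  have t1' : Tendsto (fun n : ℕ => Real.log n / n) atTop (nhds 0) :=
    t1.comp tendsto_natCast_atTop_atTop
  have t2 : Tendsto (fun n : ℕ => (1 : ℝ) / n) atTop (nhds 0) :=
    tendsto_one_div_atTop_nhds_zero_nat
  have tmain : Tendsto (fun n : ℕ =>
      r ^ 2 / 4 - r ^ 2 * (Real.log n / n * (1 / n) / 2 + 1 / n * (1 / n) / 4))
      atTop (nhds (r ^ 2 / 4)) := by
    have h := tendsto_const_nhds.sub (α := ℕ) (f := fun _ : ℕ => r ^ 2 / 4)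
      ((tendsto_const_nhds (x := r ^ 2)).mul
        (((t1'.mul t2).div_const 2).add ((t2.mul t2).div_const 4)))
    simpa using h
  refine tmain.congr' ?_
  filter_upwards [eventually_ge_atTop 2] with n hn
  exact (key n hn).symm
end

section
/- Let N ≥ 3 and let M : [0, ∞) → ℝ be continuous with inf_{t ≥ 0} M(t) = m₀ > 0 and lim_{t→∞} M(t)/t^{2/(N−2)} = 0. Then for every c > 0 there exists t > 0 such that t² = M(t^{N−2}·c). -/
open Real Set Filter

theorem exists_rescaling_parameter (N : ℕ) (hN : 3 ≤ N) (M : ℝ → ℝ)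
    (hM : Continuous M) (m₀ : ℝ) (hm₀ : 0 < m₀)
    (hinf : IsGLB (M '' (Ici 0)) m₀)
    (hlim : Tendsto (fun t => M t / t ^ ((2 : ℝ) / ((N : ℝ) - 2))) atTop (nhds 0)) :
    ∀ c > 0, ∃ t > 0, t ^ 2 = M (t ^ (N - 2) * c) := by
  intro c hc
  have hN3 : (3:ℝ) ≤ (N:ℝ) := by exact_mod_cast hN
  have hN2 : (0:ℝ) < (N:ℝ) - 2 := by linarith
  set p : ℝ := (2:ℝ) / ((N:ℝ) - 2) with hp
  have hcast : ((N - 2 : ℕ) : ℝ) = (N:ℝ) - 2 := by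
    have h2 : 2 ≤ N := by omega
    push_cast [Nat.cast_sub h2]
    ring
  -- lower bound on M
  have hlb : ∀ x : ℝ, 0 ≤ x → m₀ ≤ M x := by
    intro x hx
    exact hinf.1 ⟨x, hx, rfl⟩
  -- key rpow computation : (t^(N-2)*c)^p = t^2 * c^p for t > 0
  have hkey : ∀ t : ℝ, 0 < t → (t ^ (N - 2) * c) ^ p = t ^ 2 * c ^ p := by
    intro t ht
    have h1 : (0:ℝ) ≤ t ^ (N - 2) := by positivity
    rw [Real.mul_rpow h1 hc.le]
    congr 1
    rw [← Real.rpow_natCast t (N - 2), ← Real.rpow_mul ht.le, hcast]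
    have h2 : ((N:ℝ) - 2) * p = 2 := by
      rw [hp]; field_simp [hN2.ne']
    rw [h2]
    norm_num [Real.rpow_two]
  -- g
  set g : ℝ → ℝ := fun t => t ^ 2 - M (t ^ (N - 2) * c) with hg
  have hgc : Continuous g := by
    apply Continuous.sub (by continuity)
    exact hM.comp (by continuity)
  -- small t : choose t₀
  obtain ⟨t₀, ht₀pos, ht₀⟩ : ∃ t₀ > 0, g t₀ < 0 := by
    refine ⟨Real.sqrt m₀ / 2, by positivity, ?_⟩
    have h1 : (Real.sqrt m₀ / 2) ^ 2 = m₀ / 4 := by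
      rw [div_pow, Real.sq_sqrt hm₀.le]; norm_num
    have h2 : m₀ ≤ M ((Real.sqrt m₀ / 2) ^ (N - 2) * c) := by
      apply hlb; positivity
    simp only [hg, h1]
    linarith
  have hcp : (0:ℝ) < c ^ p := Real.rpow_pos_of_pos hc p
  have hcomp : Tendsto (fun t : ℝ => t ^ (N - 2) * c) atTop atTop := by
    apply Tendsto.atTop_mul_const hc
    exact tendsto_pow_atTop (by omega)
  -- large t : eventually g > 0
  have hev : ∀ᶠ t : ℝ in atTop, 0 < g t := by
    have hε : (0:ℝ) < 1 / (2 * c ^ p) := by positivity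
    have h := (hlim.comp hcomp).eventually (eventually_abs_sub_lt 0 hε)
    filter_upwards [h, eventually_gt_atTop (0:ℝ)] with t habs htpos
    simp only [Function.comp, sub_zero] at habs
    have hspos : (0:ℝ) < t ^ (N - 2) * c := by positivity
    have hsp : (0:ℝ) < (t ^ (N - 2) * c) ^ p := Real.rpow_pos_of_pos hspos p
    have h1 : M (t ^ (N - 2) * c) / (t ^ (N - 2) * c) ^ p < 1 / (2 * c ^ p) :=
      lt_of_le_of_lt (le_abs_self _) habs
    have h2 : M (t ^ (N - 2) * c) < (1 / (2 * c ^ p)) * ((t ^ (N - 2) * c) ^ p) :=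
      (div_lt_iff₀ hsp).mp h1
    rw [hkey t htpos] at h2
    have ht2 : (0:ℝ) < t ^ 2 := by positivity
    have h3 : (1 / (2 * c ^ p)) * (t ^ 2 * c ^ p) = t ^ 2 / 2 := by
      field_simp
    rw [h3] at h2
    simp only [hg]
    linarith
  obtain ⟨t₁, ht₁⟩ := (hev.and (eventually_ge_atTop t₀)).exists
  obtain ⟨ht₁pos, ht₁ge⟩ := ht₁
  -- IVT
  have hivt := intermediate_value_Icc ht₁ge hgc.continuousOn
  have h0 : (0:ℝ) ∈ Icc (g t₀) (g t₁) := ⟨ht₀.le, ht₁pos.le⟩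
  obtain ⟨t, htmem, htz⟩ := hivt h0
  refine ⟨t, lt_of_lt_of_le ht₀pos htmem.1, ?_⟩
  have : t ^ 2 - M (t ^ (N - 2) * c) = 0 := htz
  linarith
end

section
/- Let N ≥ 1, m > 0, let F : ℝ → ℝ be continuous with F(0) = 0 and lim_{s→0} F(s)/s² = 0, and let U : ℝ^N → ℝ be continuous, not identically zero, with U(x) → 0 as |x| → ∞ and ∫_{ℝ^N} (F(U(x)) − (m/2)U(x)²) dx ≥ 0 (with the integrand integrable). Then there exists x₀ ∈ ℝ^N with F(U(x₀)) > (m/2)·U(x₀)². -/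
open Real MeasureTheory Filter

theorem exists_point_F_above (N : ℕ) (hN : 1 ≤ N) (m : ℝ) (hm : 0 < m)
    (F : ℝ → ℝ) (hF : Continuous F) (hF0 : F 0 = 0)
    (hlim : Tendsto (fun s : ℝ => F s / s ^ 2) (nhdsWithin 0 {(0:ℝ)}ᶜ) (nhds 0))
    (U : EuclideanSpace ℝ (Fin N) → ℝ) (hU : Continuous U)
    (hUne : ∃ x, U x ≠ 0)
    (hdecay : Tendsto U (Filter.cocompact (EuclideanSpace ℝ (Fin N))) (nhds 0))
    (hint : Integrable (fun x => F (U x) - m / 2 * U x ^ 2))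
    (hge : 0 ≤ ∫ x : EuclideanSpace ℝ (Fin N), (F (U x) - m / 2 * U x ^ 2)) :
    ∃ x₀ : EuclideanSpace ℝ (Fin N), m / 2 * U x₀ ^ 2 < F (U x₀) := by
  haveI : Nonempty (Fin N) := ⟨⟨0, hN⟩⟩
  by_contra h
  push_neg at h
  -- the integrand is nonpositive, with nonnegative integral, hence a.e. zero
  have hle : ∀ x, F (U x) - m / 2 * U x ^ 2 ≤ 0 := fun x => by
    have := h x; linarith
  have hintle : (∫ x : EuclideanSpace ℝ (Fin N), (F (U x) - m / 2 * U x ^ 2)) ≤ 0 :=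
    integral_nonpos fun x => hle x
  have hzero : (∫ x : EuclideanSpace ℝ (Fin N), (F (U x) - m / 2 * U x ^ 2)) = 0 :=
    le_antisymm hintle hge
  have hnegint : Integrable (fun x : EuclideanSpace ℝ (Fin N) =>
      -(F (U x) - m / 2 * U x ^ 2)) := hint.neg
  have hnegae : (fun x : EuclideanSpace ℝ (Fin N) => -(F (U x) - m / 2 * U x ^ 2))
      =ᵐ[volume] 0 := by
    rw [← integral_eq_zero_iff_of_nonneg (fun x => by have := hle x; simp; linarith) hnegint,
      integral_neg, hzero, neg_zero]
  -- upgrade a.e. zero to everywhere zero by continuity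
  have hcont : Continuous (fun x : EuclideanSpace ℝ (Fin N) =>
      -(F (U x) - m / 2 * U x ^ 2)) :=
    ((hF.comp hU).sub (continuous_const.mul ((hU.pow 2)))).neg
  have heq : ∀ x, F (U x) = m / 2 * U x ^ 2 := by
    have hfun := (Continuous.ae_eq_iff_eq (volume) hcont continuous_zero).mp hnegae
    intro x
    have h0 : -(F (U x) - m / 2 * U x ^ 2) = 0 := congrFun hfun x
    linarith
  -- U attains arbitrarily small nonzero values
  have key : ∀ ε > (0:ℝ), ∃ t : ℝ, t ≠ 0 ∧ |t| < ε ∧ F t = m / 2 * t ^ 2 := by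
    intro ε hε
    obtain ⟨x₁, hx₁⟩ := hUne
    have habs : 0 < |U x₁| := abs_pos.mpr hx₁
    set c : ℝ := min ε |U x₁| with hc
    have hc0 : 0 < c := lt_min hε habs
    -- find a point where |U| < c/2
    have hev : ∀ᶠ x in Filter.cocompact (EuclideanSpace ℝ (Fin N)), |U x| < c / 2 := by
      have := Metric.tendsto_nhds.mp hdecay (c / 2) (by linarith)
      filter_upwards [this] with x hx
      simpa [Real.dist_eq] using hx
    obtain ⟨y, hy⟩ := hev.exists
    -- intermediate value
    rcases lt_or_gt_of_ne hx₁ with hneg | hpos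
    · -- U x₁ < 0; take t = -c/2
      refine ⟨-(c/2), neg_ne_zero.mpr (by positivity), ?_, ?_⟩
      · rw [abs_neg, abs_of_pos (by linarith)]
        have : c ≤ ε := min_le_left _ _
        linarith
      · have h1 : U x₁ < -(c/2) := by
          have : c ≤ |U x₁| := min_le_right _ _
          rw [abs_of_neg hneg] at this
          linarith
        have h2 : -(c/2) < U y := by
          have := neg_lt_of_abs_lt hy
          linarith
        have hmem : -(c/2) ∈ Set.Icc (U x₁) (U y) := ⟨le_of_lt h1, le_of_lt h2⟩
        obtain ⟨z, hz⟩ := intermediate_value_univ x₁ y hU hmem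
        rw [← hz]; exact heq z
    · -- U x₁ > 0; take t = c/2
      refine ⟨c/2, by positivity, ?_, ?_⟩
      · rw [abs_of_pos (by linarith)]
        have : c ≤ ε := min_le_left _ _
        linarith
      · have h1 : c/2 < U x₁ := by
          have : c ≤ |U x₁| := min_le_right _ _
          rw [abs_of_pos hpos] at this
          linarith
        have h2 : U y < c/2 := lt_of_abs_lt hy
        have hmem : c/2 ∈ Set.Icc (U y) (U x₁) := ⟨le_of_lt h2, le_of_lt h1⟩
        obtain ⟨z, hz⟩ := intermediate_value_univ y x₁ hU hmem
        rw [← hz]; exact heq z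
  -- contradiction with the limit
  rw [Metric.tendsto_nhdsWithin_nhds] at hlim
  obtain ⟨δ, hδ, hδ'⟩ := hlim (m / 2) (by linarith)
  obtain ⟨t, ht0, htδ, htF⟩ := key δ hδ
  have := hδ' (by simpa using ht0) (by simpa [Real.dist_eq] using htδ)
  rw [Real.dist_eq, sub_zero, htF] at this
  have ht2 : t ^ 2 ≠ 0 := pow_ne_zero _ ht0
  rw [mul_div_assoc, div_self ht2, mul_one] at this
  rw [abs_of_pos (by linarith)] at this
  linarith
end

section
/- Let (t_n) be a sequence of reals with t_n ≥ 1 for all n, and suppose there exist constants C > 0 and d ≥ 0 such that for all sufficiently large n: t_n² ≥ C·exp(2 t_n²(log n − d) − 2 log n). Then (t_n) is bounded and lim_{n→∞} t_n = 1. -/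
open Real Filter

theorem tn_tendsto_one (t : ℕ → ℝ) (ht : ∀ n, 1 ≤ t n) (C d : ℝ) (hC : 0 < C)
    (hd : 0 ≤ d)
    (h : ∀ᶠ n : ℕ in atTop,
      C * Real.exp (2 * (t n) ^ 2 * (Real.log n - d) - 2 * Real.log n) ≤ (t n) ^ 2) :
    (∃ B : ℝ, ∀ n, t n ≤ B) ∧ Tendsto t atTop (nhds 1) := by
  set c : ℝ := d + 1 / (2 * C) with hc
  have hcpos : 0 < c := by positivity
  have hL : Tendsto (fun n : ℕ => Real.log n - c) atTop atTop := by
    have := Real.tendsto_log_atTop.comp tendsto_natCast_atTop_atTop (α := ℕ)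
    exact tendsto_atTop_add_const_right atTop (-c) this
  have hu : Tendsto (fun n : ℕ => 1 + c * (Real.log n - c)⁻¹) atTop (nhds 1) := by
    have h0 : Tendsto (fun n : ℕ => (Real.log n - c)⁻¹) atTop (nhds 0) :=
      hL.inv_tendsto_atTop
    have := tendsto_const_nhds (x := (1:ℝ)) (f := atTop (α := ℕ)) |>.add
      ((tendsto_const_nhds (x := c)).mul h0)
    simpa using this
  have hev : ∀ᶠ n : ℕ in atTop, t n ^ 2 ≤ 1 + c * (Real.log n - c)⁻¹ := by
    filter_upwards [h, hL.eventually_gt_atTop 0] with n hn hpos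
    set L : ℝ := Real.log n
    set x : ℝ := t n ^ 2
    have hx1 : (1:ℝ) ≤ x := by
      have h1 : (1:ℝ)^2 ≤ t n ^ 2 := pow_le_pow_left₀ zero_le_one (ht n) 2
      rwa [one_pow] at h1
    have hexp : 2 * x * (L - d) - 2 * L + 1 ≤ Real.exp (2 * x * (L - d) - 2 * L) :=
      Real.add_one_le_exp _
    have hkey : x * (L - c) ≤ L := by
      have h2 : C * (2 * x * (L - d) - 2 * L + 1) ≤ x := by
        calc C * (2 * x * (L - d) - 2 * L + 1)
            ≤ C * Real.exp (2 * x * (L - d) - 2 * L) := by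
              exact mul_le_mul_of_nonneg_left hexp hC.le
          _ ≤ x := hn
      have hc' : c = d + 1 / (2 * C) := hc
      have hC' : (2 : ℝ) * C ≠ 0 := by positivity
      -- multiply out: x*(L-c) = x*L - x*d - x/(2C)
      have : 2 * C * (x * (L - c)) = 2 * C * x * (L - d) - x := by
        field_simp [hc']
        linear_combination (-2 * C) * hc' - one_div_mul_cancel hC'
      nlinarith [mul_pos hC (sub_pos.mpr (lt_of_sub_pos hpos))]
    have h1 : x ≤ L / (L - c) := by
      rw [le_div_iff₀ hpos]
      exact hkey
    have h2 : L / (L - c) = 1 + c * (L - c)⁻¹ := by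
      field_simp
      ring
    linarith [h1, h2 ▸ h1]
  have ht2 : ∀ᶠ n : ℕ in atTop, t n ≤ 1 + c * (Real.log n - c)⁻¹ := by
    filter_upwards [hev] with n hn
    have : t n ≤ t n ^ 2 := le_self_pow₀ (ht n) two_ne_zero
    linarith
  have htend : Tendsto t atTop (nhds 1) := by
    refine tendsto_of_tendsto_of_tendsto_of_le_of_le' tendsto_const_nhds hu
      (Eventually.of_forall ht) ht2
  refine ⟨?_, htend⟩
  obtain ⟨B, hB⟩ := htend.bddAbove_range
  exact ⟨B, fun n => hB ⟨n, rfl⟩⟩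
end
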